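/- With scal(x) = ∑_{i=1}^{ℓ} d_i b_i/(2 x_i) - (1/4) ∑_{i,j,k=1}^{ℓ} L_{ijk} x_k/(x_i x_j), where L is symmetric in its three indices, one has the identity -d_i r_i(x) = x_i · ∂ scal/∂x_i for each i, where r_i(x) = b_i/(2x_i) - (1/(4d_i)) ∑_{j,k=1}^{ℓ} L_{ijk}(2x_k² - x_i²)/(x_i x_j x_k). -/

import Mathlib

/-- The Ricci components are toric derivatives of scalar curvature:
`-dᵢ rᵢ(x) = xᵢ ∂scal/∂xᵢ`. -/
theorem ricci_toric_derivative (ℓ : ℕ) (b d : Fin ℓ → ℝ)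
    (L : Fin ℓ → Fin ℓ → Fin ℓ → ℝ)
    (hsym : ∀ i j k, L i j k = L j i k ∧ L i j k = L i k j)
    (i : Fin ℓ) (hdi : d i ≠ 0) (x : Fin ℓ → ℝ) (hx : ∀ j, x j ≠ 0) :
    -(d i) *
        (b i / (2 * x i) -
          (1 / (4 * d i)) * ∑ j, ∑ k,
            L i j k * (2 * (x k) ^ 2 - (x i) ^ 2) / (x i * x j * x k)) =
      x i *
        deriv (fun t : ℝ =>
          (∑ a, d a * b a / (2 * Function.update x i t a)) -
            (1 / 4) * ∑ a, ∑ j, ∑ k,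
              L a j k * Function.update x i t k /
                (Function.update x i t a * Function.update x i t j)) (x i) := by
  have hu : ∀ a, HasDerivAt (fun t => Function.update x i t a)
      (if a = i then 1 else 0) (x i) := by
    intro a
    simp only [Function.update_apply]
    by_cases h : a = i
    · simpa [h] using hasDerivAt_id' (x i)
    · simpa [h] using hasDerivAt_const (x i) (x a)
  have hval : Function.update x i (x i) = x := Function.update_eq_self i x
  have h1 : HasDerivAt (fun t : ℝ => ∑ a, d a * b a / (2 * Function.update x i t a))
      (∑ a, (0 * (2 * x a) - d a * b a * (2 * (if a = i then 1 else 0))) / (2 * x a) ^ 2)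
      (x i) := by
    apply HasDerivAt.fun_sum
    intro a _
    have := (hasDerivAt_const (x i) (d a * b a)).fun_div ((hu a).const_mul 2)
      (by rw [hval]; exact mul_ne_zero two_ne_zero (hx a))
    simpa [hval, mul_comm] using this
  have h2 : HasDerivAt (fun t : ℝ => ∑ a, ∑ j, ∑ k,
        L a j k * Function.update x i t k /
          (Function.update x i t a * Function.update x i t j))
      (∑ a, ∑ j, ∑ k,
        ((0 * x k + L a j k * (if k = i then 1 else 0)) * (x a * x j)
          - L a j k * x k * ((if a = i then 1 else 0) * x j + x a * (if j = i then 1 else 0)))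
          / (x a * x j) ^ 2) (x i) := by
    apply HasDerivAt.fun_sum; intro a _
    apply HasDerivAt.fun_sum; intro j _
    apply HasDerivAt.fun_sum; intro k _
    have := ((hasDerivAt_const (x i) (L a j k)).fun_mul (hu k)).fun_div ((hu a).fun_mul (hu j))
      (by rw [hval]; exact mul_ne_zero (hx a) (hx j))
    simpa [hval] using this
  rw [(h1.fun_sub (h2.const_mul (1/4))).deriv]
  -- collapse the first sum
  have hDA : (∑ a, (0 * (2 * x a) - d a * b a * (2 * (if a = i then 1 else 0))) / (2 * x a) ^ 2)
      = -(d i * b i) / (2 * (x i) ^ 2) := by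
    rw [Finset.sum_eq_single i]
    · have := hx i
      field_simp
      simp
    · intro a _ ha
      simp [ha]
    · simp
  rw [hDA]
  -- rewrite the triple sum
  have hDB : (∑ a, ∑ j, ∑ k,
        ((0 * x k + L a j k * (if k = i then 1 else 0)) * (x a * x j)
          - L a j k * x k * ((if a = i then 1 else 0) * x j + x a * (if j = i then 1 else 0)))
          / (x a * x j) ^ 2)
      = ∑ j, ∑ k, (L i j k / (x j * x k) - 2 * L i j k * x k / ((x i) ^ 2 * x j)) := by
    have split : ∀ a j k : Fin ℓ,
        ((0 * x k + L a j k * (if k = i then 1 else 0)) * (x a * x j)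
          - L a j k * x k * ((if a = i then 1 else 0) * x j + x a * (if j = i then 1 else 0)))
          / (x a * x j) ^ 2
        = (if k = i then L a j k * (x a * x j) / (x a * x j) ^ 2 else 0)
          + ((if a = i then -(L a j k * x k * x j) / (x a * x j) ^ 2 else 0)
          + (if j = i then -(L a j k * x k * x a) / (x a * x j) ^ 2 else 0)) := by
      intro a j k
      split_ifs <;> ring
    simp only [split, Finset.sum_add_distrib]
    have e1 : (∑ a, ∑ j, ∑ k, (if k = i then L a j k * (x a * x j) / (x a * x j) ^ 2 else 0))
        = ∑ j, ∑ k, L i j k / (x j * x k) := by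
      simp only [Finset.sum_ite_eq', Finset.mem_univ, if_true]
      rw [Finset.sum_comm]
      refine Finset.sum_congr rfl fun j _ => Finset.sum_congr rfl fun a _ => ?_
      have hL : L a j i = L i j a := by
        rw [(hsym a j i).2, (hsym a i j).1, (hsym i a j).2]
      rw [hL]
      have := hx a; have := hx j
      field_simp
    have pullQ : ∀ a : Fin ℓ,
        (∑ j, ∑ k, (if a = i then -(L a j k * x k * x j) / (x a * x j) ^ 2 else 0))
        = if a = i then ∑ j, ∑ k, -(L a j k * x k * x j) / (x a * x j) ^ 2 else 0 := by
      intro a; split_ifs <;> simp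
    have e2 : (∑ a, ∑ j, ∑ k, (if a = i then -(L a j k * x k * x j) / (x a * x j) ^ 2 else 0))
        = ∑ j, ∑ k, -(L i j k * x k) / ((x i) ^ 2 * x j) := by
      simp only [pullQ, Finset.sum_ite_eq', Finset.mem_univ, if_true]
      refine Finset.sum_congr rfl fun j _ => Finset.sum_congr rfl fun k _ => ?_
      have := hx i; have := hx j
      field_simp
    have pullR : ∀ a j : Fin ℓ,
        (∑ k, (if j = i then -(L a j k * x k * x a) / (x a * x j) ^ 2 else 0))
        = if j = i then ∑ k, -(L a j k * x k * x a) / (x a * x j) ^ 2 else 0 := by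
      intro a j; split_ifs <;> simp
    have e3 : (∑ a, ∑ j, ∑ k, (if j = i then -(L a j k * x k * x a) / (x a * x j) ^ 2 else 0))
        = ∑ j, ∑ k, -(L i j k * x k) / ((x i) ^ 2 * x j) := by
      simp only [pullR, Finset.sum_ite_eq', Finset.mem_univ, if_true]
      refine Finset.sum_congr rfl fun a _ => Finset.sum_congr rfl fun k _ => ?_
      have hL : L a i k = L i a k := (hsym a i k).1
      rw [hL]
      have := hx a; have := hx i
      field_simp
    rw [e1, e2, e3, ← Finset.sum_add_distrib]
    simp only [← Finset.sum_add_distrib]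
    refine Finset.sum_congr rfl fun j _ => Finset.sum_congr rfl fun k _ => ?_
    ring
  rw [hDB]
  -- final algebraic identity
  have hSig : (∑ j, ∑ k, L i j k * (2 * (x k) ^ 2 - (x i) ^ 2) / (x i * x j * x k))
      = -(x i) * ∑ j, ∑ k,
          (L i j k / (x j * x k) - 2 * L i j k * x k / ((x i) ^ 2 * x j)) := by
    rw [Finset.mul_sum]
    refine Finset.sum_congr rfl fun j _ => ?_
    rw [Finset.mul_sum]
    refine Finset.sum_congr rfl fun k _ => ?_
    have := hx i; have := hx j; have := hx k
    field_simp
    ring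
  rw [hSig]
  set S := ∑ j, ∑ k, (L i j k / (x j * x k) - 2 * L i j k * x k / ((x i) ^ 2 * x j)) with hS
  have := hx i
  field_simp
  ring
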